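/- The supremum norm of the 2-homogeneous polynomial P(z₁,z₂) = a z₁² + b z₂² + c z₁ z₂ on the closed unit bidisc in ℂ², where a, b, c are real with ab < 0 and |c(a+b)| ≤ 4|ab|, equals (|a| + |b|)·sqrt(1 + c²/(4|ab|)). -/

import Mathlib

set_option maxHeartbeats 1000000

open Complex in
private theorem stmt_3_ub (a b c : ℝ) (ha : 0 < a) (hb : b < 0) (z₁ z₂ : ℂ)
    (h1 : ‖z₁‖ ≤ 1) (h2 : ‖z₂‖ ≤ 1) :
    ‖(a:ℂ) * z₁ ^ 2 + (b:ℂ) * z₂ ^ 2 + (c:ℂ) * z₁ * z₂‖^2 ≤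
      (a - b)^2 * (1 + c^2 / (4 * (-(a*b)))) := by
  set n₁ := Complex.normSq z₁ with hn1
  set n₂ := Complex.normSq z₂ with hn2
  set x := (z₁ * (starRingEnd ℂ) z₂).re with hx
  set y := (z₁ * (starRingEnd ℂ) z₂).im with hy
  have hxy : x^2 + y^2 = n₁ * n₂ := by
    have h : Complex.normSq (z₁ * (starRingEnd ℂ) z₂) = n₁ * n₂ := by
      rw [map_mul, Complex.normSq_conj]
    rw [Complex.normSq_apply] at h
    rw [← h]; ring
  have hn1le : n₁ ≤ 1 := by
    have := Complex.sq_norm z₁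
    nlinarith [norm_nonneg z₁]
  have hn2le : n₂ ≤ 1 := by
    have := Complex.sq_norm z₂
    nlinarith [norm_nonneg z₂]
  have hn1p : 0 ≤ n₁ := Complex.normSq_nonneg z₁
  have hn2p : 0 ≤ n₂ := Complex.normSq_nonneg z₂
  have key : ‖(a:ℂ) * z₁ ^ 2 + (b:ℂ) * z₂ ^ 2 + (c:ℂ) * z₁ * z₂‖^2 =
      a^2 * n₁^2 + b^2 * n₂^2 + c^2 * (n₁ * n₂)
      + 2*a*b*(x^2 - y^2) + 2*a*c*n₁*x + 2*b*c*n₂*x := by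
    rw [Complex.sq_norm]
    simp only [hn1, hn2, hx, hy, Complex.normSq_apply, Complex.add_re, Complex.add_im,
      Complex.mul_re, Complex.mul_im, Complex.ofReal_re, Complex.ofReal_im,
      Complex.conj_re, Complex.conj_im, pow_two]
    ring
  rw [key]
  have he : (0:ℝ) < 4 * (-(a*b)) := by nlinarith
  have ha' : a ≠ 0 := ha.ne'
  have hb' : b ≠ 0 := hb.ne
  have hgoal : (a-b)^2 * (1 + c^2 / (4 * (-(a*b)))) =
      ((a-b)^2 * (4 * (-(a*b)) + c^2)) / (4 * (-(a*b))) := by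
    field_simp
    ring
  rw [hgoal, le_div_iff₀ he]
  have f1 : 0 ≤ a*(1+n₁) - b*(1+n₂) := by nlinarith
  have f2 : 0 ≤ a*(1-n₁) - b*(1-n₂) := by nlinarith
  have f3 : 0 ≤ c^2 - 4*(a*b) := by nlinarith
  have expand : (a^2 * n₁^2 + b^2 * n₂^2 + c^2 * (n₁ * n₂)
      + 2*a*b*(x^2 - y^2) + 2*a*c*n₁*x + 2*b*c*n₂*x) * (4 * (-(a*b))) =
      (c^2 - 4*(a*b)) * (a*n₁ - b*n₂)^2 - (4*(a*b)*x + c*(a*n₁ + b*n₂))^2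
      + 8*(a*b)^2 * (x^2 + y^2 - n₁*n₂) := by ring
  rw [expand, hxy]
  nlinarith [sq_nonneg (4*(a*b)*x + c*(a*n₁ + b*n₂)), mul_nonneg (mul_nonneg f1 f2) f3]

open Complex in
private theorem stmt_3_att (a b c : ℝ) (ha : 0 < a) (hb : b < 0)
    (hc : |c * (a + b)| ≤ 4 * |a * b|) :
    ∃ z₁ z₂ : ℂ, ‖z₁‖ ≤ 1 ∧ ‖z₂‖ ≤ 1 ∧
      ‖(a:ℂ) * z₁ ^ 2 + (b:ℂ) * z₂ ^ 2 + (c:ℂ) * z₁ * z₂‖ =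
        (a - b) * Real.sqrt (1 + c ^ 2 / (4 * (-(a*b)))) := by
  have ha' : a ≠ 0 := ha.ne'
  have hb' : b ≠ 0 := hb.ne
  have hab : a * b < 0 := mul_neg_of_pos_of_neg ha hb
  have habs : |a * b| = -(a*b) := abs_of_neg hab
  set t : ℝ := -(c * (a + b)) / (4 * (a * b)) with hta
  have ht : |t| ≤ 1 := by
    rw [abs_div, abs_neg]
    rw [div_le_one (by positivity)]
    calc |c * (a + b)| ≤ 4 * |a * b| := hc
      _ = |4 * (a * b)| := by rw [abs_mul 4 (a * b)]; norm_num
  have ht1 : -1 ≤ t := neg_le_of_abs_le ht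
  have ht2 : t ≤ 1 := le_of_abs_le ht
  set ψ := Real.arccos t with hψ
  have hcos : Real.cos ψ = t := Real.cos_arccos ht1 ht2
  have hsin : Real.sin ψ ^ 2 = 1 - t ^ 2 := by
    rw [hψ, Real.sin_arccos, Real.sq_sqrt (by nlinarith)]
  refine ⟨Complex.exp ((ψ/2 : ℝ) * Complex.I), Complex.exp ((-(ψ/2) : ℝ) * Complex.I), ?_, ?_, ?_⟩
  · rw [Complex.norm_exp_ofReal_mul_I]
  · rw [Complex.norm_exp_ofReal_mul_I]
  · have e1 : Complex.exp ((ψ/2 : ℝ) * Complex.I) ^ 2 = Complex.exp ((ψ:ℝ) * Complex.I) := by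
      rw [sq, ← Complex.exp_add]
      congr 1
      push_cast
      ring
    have e2 : Complex.exp ((-(ψ/2) : ℝ) * Complex.I) ^ 2 = Complex.exp ((-ψ:ℝ) * Complex.I) := by
      rw [sq, ← Complex.exp_add]
      congr 1
      push_cast
      ring
    have e3 : Complex.exp ((ψ/2 : ℝ) * Complex.I) * Complex.exp ((-(ψ/2) : ℝ) * Complex.I) = 1 := by
      rw [← Complex.exp_add]
      rw [show ((ψ/2 : ℝ) * Complex.I + (-(ψ/2) : ℝ) * Complex.I) = 0 by push_cast; ring,
        Complex.exp_zero]
    rw [e1, e2, show (c:ℂ) * Complex.exp ((ψ/2 : ℝ) * Complex.I) * Complex.exp ((-(ψ/2) : ℝ) * Complex.I)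
        = (c:ℂ) * (Complex.exp ((ψ/2 : ℝ) * Complex.I) * Complex.exp ((-(ψ/2) : ℝ) * Complex.I)) by ring,
      e3, mul_one]
    have e4 : (a:ℂ) * Complex.exp ((ψ:ℝ) * Complex.I) + (b:ℂ) * Complex.exp ((-ψ:ℝ) * Complex.I) + (c:ℂ)
        = (((a+b) * Real.cos ψ + c : ℝ) : ℂ) + (((a-b) * Real.sin ψ : ℝ) : ℂ) * Complex.I := by
      rw [Complex.exp_mul_I, Complex.exp_mul_I]
      push_cast
      rw [Complex.cos_neg, Complex.sin_neg]
      ring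
    rw [e4, Complex.norm_def, Complex.normSq_add_mul_I]
    have key : ((a+b) * Real.cos ψ + c)^2 + ((a-b) * Real.sin ψ)^2
        = (a-b)^2 * (1 + c^2 / (4 * (-(a*b)))) := by
      rw [hcos, mul_pow, hsin, hta]
      field_simp
      ring
    rw [key, Real.sqrt_mul (sq_nonneg _), Real.sqrt_sq (by nlinarith)]

private theorem stmt_3_aux (a b c : ℝ) (ha : 0 < a) (hb : b < 0)
    (hc : |c * (a + b)| ≤ 4 * |a * b|) :
    sSup {y : ℝ | ∃ z₁ z₂ : ℂ, ‖z₁‖ ≤ 1 ∧ ‖z₂‖ ≤ 1 ∧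
        y = ‖(a:ℂ) * z₁ ^ 2 + (b:ℂ) * z₂ ^ 2 + (c:ℂ) * z₁ * z₂‖} =
      (|a| + |b|) * Real.sqrt (1 + c ^ 2 / (4 * |a * b|)) := by
  have hab : a * b < 0 := mul_neg_of_pos_of_neg ha hb
  have habs : |a * b| = -(a*b) := abs_of_neg hab
  have hMeq : (|a| + |b|) * Real.sqrt (1 + c ^ 2 / (4 * |a * b|)) =
      (a - b) * Real.sqrt (1 + c ^ 2 / (4 * (-(a*b)))) := by
    rw [habs, abs_of_pos ha, abs_of_neg hb]
    ring_nf
  rw [hMeq]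
  apply IsGreatest.csSup_eq
  constructor
  · obtain ⟨z₁, z₂, h1, h2, h3⟩ := stmt_3_att a b c ha hb hc
    exact ⟨z₁, z₂, h1, h2, h3.symm⟩
  · rintro y ⟨z₁, z₂, h1, h2, rfl⟩
    have hub := stmt_3_ub a b c ha hb z₁ z₂ h1 h2
    have hK : (0:ℝ) ≤ 1 + c ^ 2 / (4 * (-(a*b))) := by
      have h4 : (0:ℝ) < 4 * (-(a*b)) := by nlinarith
      have := div_nonneg (sq_nonneg c) h4.le
      linarith
    calc ‖(a:ℂ) * z₁ ^ 2 + (b:ℂ) * z₂ ^ 2 + (c:ℂ) * z₁ * z₂‖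
        = Real.sqrt (‖(a:ℂ) * z₁ ^ 2 + (b:ℂ) * z₂ ^ 2 + (c:ℂ) * z₁ * z₂‖^2) :=
          (Real.sqrt_sq (norm_nonneg _)).symm
      _ ≤ Real.sqrt ((a - b)^2 * (1 + c^2 / (4 * (-(a*b))))) := Real.sqrt_le_sqrt hub
      _ = (a - b) * Real.sqrt (1 + c ^ 2 / (4 * (-(a*b)))) := by
          rw [Real.sqrt_mul (sq_nonneg _), Real.sqrt_sq (by nlinarith)]

theorem stmt_3 (a b c : ℝ) (hab : a * b < 0) (hc : |c * (a + b)| ≤ 4 * |a * b|) :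
    sSup {y : ℝ | ∃ z₁ z₂ : ℂ, ‖z₁‖ ≤ 1 ∧ ‖z₂‖ ≤ 1 ∧
        y = ‖(a:ℂ) * z₁ ^ 2 + (b:ℂ) * z₂ ^ 2 + (c:ℂ) * z₁ * z₂‖} =
      (|a| + |b|) * Real.sqrt (1 + c ^ 2 / (4 * |a * b|)) := by
  rcases lt_trichotomy a 0 with ha | ha | ha
  · -- a < 0, so b > 0; apply aux to (-a, -b, -c)
    have hb : 0 < b := by
      rcases lt_trichotomy b 0 with h | h | h
      · nlinarith
      · simp [h] at hab
      · exact h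
    have hc' : |(-c) * ((-a) + (-b))| ≤ 4 * |(-a) * (-b)| := by
      rw [show (-c) * ((-a) + (-b)) = c * (a + b) by ring, show (-a) * (-b) = a * b by ring]
      exact hc
    have := stmt_3_aux (-a) (-b) (-c) (by linarith) (by linarith) hc'
    have hset : {y : ℝ | ∃ z₁ z₂ : ℂ, ‖z₁‖ ≤ 1 ∧ ‖z₂‖ ≤ 1 ∧
        y = ‖((-a:ℝ):ℂ) * z₁ ^ 2 + ((-b:ℝ):ℂ) * z₂ ^ 2 + ((-c:ℝ):ℂ) * z₁ * z₂‖} =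
        {y : ℝ | ∃ z₁ z₂ : ℂ, ‖z₁‖ ≤ 1 ∧ ‖z₂‖ ≤ 1 ∧
        y = ‖(a:ℂ) * z₁ ^ 2 + (b:ℂ) * z₂ ^ 2 + (c:ℂ) * z₁ * z₂‖} := by
      ext y
      constructor <;> rintro ⟨z₁, z₂, h1, h2, rfl⟩ <;> refine ⟨z₁, z₂, h1, h2, ?_⟩
      · push_cast
        rw [show -(a:ℂ) * z₁ ^ 2 + -(b:ℂ) * z₂ ^ 2 + -(c:ℂ) * z₁ * z₂
            = -((a:ℂ) * z₁ ^ 2 + (b:ℂ) * z₂ ^ 2 + (c:ℂ) * z₁ * z₂) by ring, norm_neg]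
      · push_cast
        rw [show -(a:ℂ) * z₁ ^ 2 + -(b:ℂ) * z₂ ^ 2 + -(c:ℂ) * z₁ * z₂
            = -((a:ℂ) * z₁ ^ 2 + (b:ℂ) * z₂ ^ 2 + (c:ℂ) * z₁ * z₂) by ring, norm_neg]
    rw [hset] at this
    rw [this]
    simp [abs_neg, neg_mul_neg, neg_sq]
  · simp [ha] at hab
  · have hb : b < 0 := by
      rcases lt_trichotomy b 0 with h | h | h
      · exact h
      · simp [h] at hab
      · nlinarith
    exact stmt_3_aux a b c ha hb hc
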